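/- Let L be a reduced multiplicative lattice with finitely many minimal prime elements p₁,…,pₙ whose meet is 0. Define f(x) = min{i : x ≰ pᵢ} for each vertex x of Γᵐ(L). Then f is a proper coloring of Γᵐ(L), i.e., adjacent vertices receive different colors. -/

import Mathlib

variable {α : Type*}

/-- Iterated product `a^n` in a multiplicative lattice (with `a^0 = ⊤`). -/
def mpow [CompleteLattice α] (mul : α → α → α) (a : α) : ℕ → α
  | 0 => ⊤
  | n + 1 => mul a (mpow mul a n)

/-- `mul` makes the complete lattice `α` into a multiplicative lattice. -/
def IsMulLattice [CompleteLattice α] (mul : α → α → α) : Prop :=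
  (∀ a b : α, mul a b = mul b a) ∧
  (∀ a b c : α, mul (mul a b) c = mul a (mul b c)) ∧
  (∀ (a : α) (s : Set α), mul a (sSup s) = ⨆ b ∈ s, mul a b) ∧
  (∀ a b : α, mul a b ≤ a ⊓ b) ∧
  (∀ a : α, mul a ⊤ = a)

/-- The multiplicative lattice is reduced: the only nilpotent element is `⊥`. -/
def LatReduced [CompleteLattice α] (mul : α → α → α) : Prop :=
  ∀ (a : α) (n : ℕ), mpow mul a (n + 1) = ⊥ → a = ⊥

/-- `a* = sup {x | x·a = 0}`. -/
def starAnn [CompleteLattice α] (mul : α → α → α) (a : α) : α :=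
  sSup {x : α | mul x a = ⊥}

/-- A prime element of a multiplicative lattice. -/
def IsPrimeElt [CompleteLattice α] (mul : α → α → α) (p : α) : Prop :=
  p ≠ ⊤ ∧ ∀ a b : α, mul a b ≤ p → a ≤ p ∨ b ≤ p

/-- The zero-divisor graph `Γᵐ(L)` of a multiplicative lattice. -/
def zdg [CompleteLattice α] (mul : α → α → α) : SimpleGraph α where
  Adj a b := a ≠ b ∧ a ≠ ⊥ ∧ b ≠ ⊥ ∧ mul a b = ⊥ ∧ mul b a = ⊥
  symm := ⟨fun a b h => ⟨h.1.symm, h.2.2.1, h.2.1, h.2.2.2.2, h.2.2.2.1⟩⟩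
  loopless := ⟨fun a h => h.1 rfl⟩

/-- `Clique(Γᵐ(L)) < ∞`. -/
def CliqueBounded [CompleteLattice α] (mul : α → α → α) : Prop :=
  ∃ N : ℕ, ∀ s : Finset α, (zdg mul).IsClique ↑s → s.card ≤ N

theorem min_index_coloring_proper [CompleteLattice α] (mul : α → α → α)
    (hL : IsMulLattice mul) (hred : LatReduced mul) (n : ℕ) (p : Fin n → α)
    (hp : ∀ i, IsPrimeElt mul (p i) ∧ ∀ q : α, IsPrimeElt mul q → q ≤ p i → q = p i)
    (hmeet : ⨅ i, p i = ⊥) :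
    ∀ x y : α, x ≠ ⊥ → y ≠ ⊥ → x ≠ y → mul x y = ⊥ →
      sInf {i : ℕ | ∃ h : i < n, ¬ x ≤ p ⟨i, h⟩} ≠
        sInf {i : ℕ | ∃ h : i < n, ¬ y ≤ p ⟨i, h⟩} := by
  intro x y hx hy hxy hmul heq
  have nonem : ∀ z : α, z ≠ ⊥ → {i : ℕ | ∃ h : i < n, ¬ z ≤ p ⟨i, h⟩}.Nonempty := by
    intro z hz
    by_contra hcon
    apply hz
    rw [Set.not_nonempty_iff_eq_empty] at hcon
    have : ∀ i : Fin n, z ≤ p i := by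
      intro i
      by_contra hle
      have : (i : ℕ) ∈ {i : ℕ | ∃ h : i < n, ¬ z ≤ p ⟨i, h⟩} := ⟨i.2, hle⟩
      simp [hcon] at this
    have := le_iInf this
    rw [hmeet] at this
    exact le_bot_iff.mp this
  have hxmem := Nat.sInf_mem (nonem x hx)
  have hymem := Nat.sInf_mem (nonem y hy)
  obtain ⟨hi, hxp⟩ := hxmem
  obtain ⟨hj, hyp⟩ := hymem
  have hfin : (⟨_, hj⟩ : Fin n) = ⟨_, hi⟩ := Fin.mk_eq_mk.mpr heq.symm
  rw [hfin] at hyp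
  have hprime := (hp ⟨_, hi⟩).1.2 x y (by rw [hmul]; exact bot_le)
  exact hprime.elim hxp hyp
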